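/- Let R be a finite ring of prime characteristic p such that the order of R^× is relatively prime to p. Then R is isomorphic as a ring to a finite product of finite fields of characteristic p, i.e. R ≅ ∏_{i=1}^n F_{p^{k_i}}; consequently R^× is isomorphic to the product of cyclic groups ∏_{i=1}^n C_{p^{k_i} − 1}. -/

import Mathlib

set_option linter.unusedVariables false


section Aux

variable {S : Type} [Ring S]

/-- The two-sided corner set of an idempotent, as a non-unital subring. -/
def cornerSubring (e : S) : NonUnitalSubring S where
  carrier := {x | e * x = x ∧ x * e = x}
  zero_mem' := by simp
  add_mem' := by
    rintro a b ⟨h1, h2⟩ ⟨h3, h4⟩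
    exact ⟨by rw [mul_add, h1, h3], by rw [add_mul, h2, h4]⟩
  neg_mem' := by
    rintro a ⟨h1, h2⟩
    exact ⟨by rw [mul_neg, h1], by rw [neg_mul, h2]⟩
  mul_mem' := by
    rintro a b ⟨h1, h2⟩ ⟨h3, h4⟩
    exact ⟨by rw [← mul_assoc, h1], by rw [mul_assoc, h4]⟩

theorem mem_cornerSubring {e x : S} : x ∈ cornerSubring e ↔ e * x = x ∧ x * e = x := Iff.rfl

/-- A corner of a ring is a (unital) ring with unit the idempotent. -/
def cornerRing {e : S} (he : IsIdempotentElem e) : Ring (cornerSubring e) :=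
  { (inferInstance : NonUnitalRing (cornerSubring e)) with
    one := ⟨e, he, he⟩
    one_mul := fun x => Subtype.ext x.2.1
    mul_one := fun x => Subtype.ext x.2.2 }

theorem isReduced_of_sq (h : ∀ x : S, x * x = 0 → x = 0) : IsReduced S := by
  suffices H : ∀ n (x : S), x ^ n = 0 → x = 0 by
    exact ⟨fun x ⟨n, hn⟩ => H n x hn⟩
  intro n
  induction n using Nat.strong_induction_on with
  | _ n ih =>
    intro x hn
    match n, hn with
    | 0, hn =>
      rw [pow_zero] at hn
      calc x = x * 1 := (mul_one x).symm
        _ = 0 := by rw [hn, mul_zero]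
    | 1, hn => simpa using hn
    | (n+2), hn =>
      have hm : x ^ ((n+3)/2) * x ^ ((n+3)/2) = 0 := by
        rw [← pow_add]
        have h2 : (n+3)/2 + (n+3)/2 = (n+2) + ((n+3)/2 + (n+3)/2 - (n+2)) := by omega
        rw [h2, pow_add, hn, zero_mul]
      exact ih ((n+3)/2) (by omega) x (h _ hm)

theorem idem_central [IsReduced S] {e : S} (he : IsIdempotentElem e) (r : S) :
    e * r = r * e := by
  have key : ∀ a : S, a * a = 0 → a = 0 := fun a ha =>
    IsNilpotent.eq_zero ⟨2, by rwa [pow_two]⟩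
  have hee : ∀ x : S, e * (e * x) = e * x := fun x => by
    rw [← mul_assoc]; unfold IsIdempotentElem at he; rw [he]
  have h1 : e * r = e * (r * e) := by
    have : (e * r - e * (r * e)) * (e * r - e * (r * e)) = 0 := by
      simp only [mul_sub, sub_mul, mul_assoc, hee]
      abel
    have := key _ this
    rwa [sub_eq_zero] at this
  have h2 : r * e = e * (r * e) := by
    have : (r * e - e * (r * e)) * (r * e - e * (r * e)) = 0 := by
      simp only [mul_sub, sub_mul, mul_assoc, hee]
      abel
    have := key _ this
    rwa [sub_eq_zero] at this
  exact h1.trans h2.symm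

theorem pow_idem [Finite S] (x : S) : ∃ m, 0 < m ∧ IsIdempotentElem (x ^ m) := by
  obtain ⟨a, b, hne, heq⟩ := Finite.exists_ne_map_eq_of_infinite (fun n : ℕ => x ^ n)
  wlog hab : a < b generalizing a b
  · exact this b a hne.symm heq.symm (by omega)
  set d := b - a with hd
  have hd0 : 0 < d := by omega
  have hstep : ∀ n, a ≤ n → x ^ (n + d) = x ^ n := by
    intro n hn
    have h1 : x ^ n = x ^ a * x ^ (n - a) := by rw [← pow_add]; congr 1; omega
    have h2 : x ^ (n + d) = x ^ b * x ^ (n - a) := by rw [← pow_add]; congr 1; omega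
    rw [h1, h2, heq]
  have hmul : ∀ t : ℕ, x ^ (d * (a + 1) + t * d) = x ^ (d * (a + 1)) := by
    intro t
    induction t with
    | zero => simp
    | succ s ihs =>
      have : d * (a + 1) + (s + 1) * d = (d * (a + 1) + s * d) + d := by ring
      rw [this, hstep _ (by nlinarith), ihs]
  refine ⟨d * (a + 1), by positivity, ?_⟩
  unfold IsIdempotentElem
  rw [← pow_add]
  have : d * (a + 1) + d * (a + 1) = d * (a + 1) + (a + 1) * d := by ring
  rw [this, hmul (a + 1)]

end Aux


/-- In a corner ring, powers (with positive exponent) agree with ambient powers. -/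
theorem corner_pow {S : Type} [Ring S] {e : S} (he : IsIdempotentElem e)
    (x : cornerSubring e) (n : ℕ) (hn : 0 < n) :
    letI := cornerRing he
    ((x ^ n : cornerSubring e) : S) = (x : S) ^ n := by
  letI := cornerRing he
  induction n with
  | zero => omega
  | succ m ihm =>
    rcases Nat.eq_zero_or_pos m with hm | hm
    · subst hm; simp [pow_one]
    · rw [pow_succ, pow_succ, ← ihm hm]; rfl

theorem corner_reduced {S : Type} [Ring S] [IsReduced S] {e : S} (he : IsIdempotentElem e) :
    letI := cornerRing he
    IsReduced (cornerSubring e) := by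
  letI := cornerRing he
  refine ⟨fun x ⟨n, hn⟩ => ?_⟩
  rcases Nat.eq_zero_or_pos n with h0 | h0
  · subst h0
    rw [pow_zero] at hn
    have h1 : e = (0 : S) := congrArg Subtype.val hn
    have hx := x.2.1
    have h2 : e * (x : S) = 0 * (x : S) := congrArg (· * (x : S)) h1
    have h3 : (x : S) = 0 := by rw [← hx, h2, zero_mul]
    exact Subtype.ext h3
  · have : ((x : S)) ^ n = 0 := by
      rw [← corner_pow he x n h0, hn]; rfl
    have hval : (x : S) = 0 := IsNilpotent.eq_zero ⟨n, this⟩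
    exact Subtype.ext hval

theorem comm_of_reduced : ∀ (c : ℕ) (S : Type) [Ring S] [Finite S], Nat.card S ≤ c →
    IsReduced S → ∀ a b : S, a * b = b * a := by
  intro c
  induction c using Nat.strong_induction_on with
  | _ c ih =>
    intro S _ _ hcard hred a b
    by_cases hex : ∃ e : S, IsIdempotentElem e ∧ e ≠ 0 ∧ e ≠ 1
    · obtain ⟨e, he, he0, he1⟩ := hex
      -- split into two corners
      have hec : ∀ r : S, e * r = r * e := idem_central he
      have he' : IsIdempotentElem (1 - e) := he.one_sub
      have hec' : ∀ r : S, (1 - e) * r = r * (1 - e) := idem_central he'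
      -- generic facts about a central idempotent f
      have main : ∀ f : S, IsIdempotentElem f → (∀ r : S, f * r = r * f) → f ≠ 1 →
          ∀ x y : S, (f * x) * (f * y) = (f * y) * (f * x) := by
        intro f hf hfc hf1 x y
        letI := cornerRing hf
        haveI : Finite (cornerSubring f) := Finite.of_injective _ Subtype.val_injective
        haveI := corner_reduced hf
        have hmem : ∀ z : S, f * z ∈ cornerSubring f := by
          intro z
          refine ⟨by rw [← mul_assoc, hf], ?_⟩
          rw [mul_assoc, ← hfc z, ← mul_assoc, hf]
        have hlt : Nat.card (cornerSubring f) < Nat.card S := by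
          classical
          haveI := Fintype.ofFinite S
          haveI : DecidablePred (· ∈ cornerSubring f) := fun _ => Classical.dec _
          rw [Nat.card_eq_fintype_card, Nat.card_eq_fintype_card]
          refine Fintype.card_subtype_lt (x := (1 : S)) ?_
          intro hmem1
          exact hf1 (by rw [← hmem1.1, mul_one])
        have := ih (Nat.card (cornerSubring f)) (lt_of_lt_of_le hlt hcard)
          (cornerSubring f) le_rfl (corner_reduced hf) ⟨f * x, hmem x⟩ ⟨f * y, hmem y⟩
        exact congrArg Subtype.val this
      have split : ∀ f : S, IsIdempotentElem f → (∀ r : S, f * r = r * f) →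
          ∀ x y : S, (f * x) * (f * y) = f * (x * y) := by
        intro f hf hfc x y
        calc (f * x) * (f * y) = f * ((x * f) * y) := by rw [mul_assoc, mul_assoc]
          _ = f * ((f * x) * y) := by rw [hfc x]
          _ = (f * f) * (x * y) := by rw [mul_assoc, mul_assoc]
          _ = f * (x * y) := by rw [hf]
      have h1e : (1 : S) - e ≠ 1 := fun h => he0 (by
        have := congrArg (fun z => (1 : S) - z) h
        simpa using this)
      calc a * b = e * (a * b) + (1 - e) * (a * b) := by
            rw [← add_mul, add_sub_cancel, one_mul]
        _ = (e * a) * (e * b) + ((1 - e) * a) * ((1 - e) * b) := by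
            rw [split e he hec, split _ he' hec']
        _ = (e * b) * (e * a) + ((1 - e) * b) * ((1 - e) * a) := by
            rw [main e he hec he1, main _ he' hec' h1e]
        _ = e * (b * a) + (1 - e) * (b * a) := by
            rw [split e he hec, split _ he' hec']
        _ = b * a := by rw [← add_mul, add_sub_cancel, one_mul]
    · push_neg at hex
      rcases subsingleton_or_nontrivial S with hS | hS
      · exact Subsingleton.elim _ _
      · have hu : ∀ x : S, x ≠ 0 → ∃ m, 0 < m ∧ x ^ m = 1 := by
          intro x hx
          obtain ⟨m, hm, hidem⟩ := pow_idem x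
          rcases (em (x ^ m = 0)) with h0 | h0
          · exact absurd (IsNilpotent.eq_zero ⟨m, h0⟩) hx
          · have := hex (x ^ m) hidem
            tauto
        haveI : NoZeroDivisors S := by
          constructor
          intro x y hxy
          by_contra hcon
          push_neg at hcon
          obtain ⟨m, hm, hx1⟩ := hu x hcon.1
          apply hcon.2
          have : x ^ (m - 1) * (x * y) = y := by
            rw [← mul_assoc, ← pow_succ]
            have hms : m - 1 + 1 = m := by omega
            rw [hms, hx1, one_mul]
          rw [← this, hxy, mul_zero]
        haveI : IsCancelMulZero S := NoZeroDivisors.to_isCancelMulZero S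
        haveI : IsDomain S := {}
        exact (Finite.isDomain_to_isField S).mul_comm a b


/-- Units of a product of monoids. -/
def piUnits {ι : Type*} (M : ι → Type*) [∀ i, Monoid (M i)] :
    (∀ i, M i)ˣ ≃* ∀ i, (M i)ˣ where
  toFun u i := ⟨u.val i, u.inv i, congrFun u.val_inv i, congrFun u.inv_val i⟩
  invFun f :=
    ⟨fun i => f i, fun i => ((f i)⁻¹ : (M i)ˣ),
      funext fun i => (f i).val_inv, funext fun i => (f i).inv_val⟩
  left_inv u := Units.ext rfl
  right_inv f := funext fun i => Units.ext rfl
  map_mul' u v := funext fun i => Units.ext rfl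

theorem field_pieces (p : ℕ) [Fact p.Prime] (K : Type) [Field K] [Finite K] [CharP K p] :
    ∃ m : ℕ, 0 < m ∧ Nonempty (K ≃+* GaloisField p m) ∧
      Nonempty (Kˣ ≃* Multiplicative (ZMod (p ^ m - 1))) := by
  classical
  haveI : Fintype K := Fintype.ofFinite K
  haveI : Algebra (ZMod p) K := ZMod.algebra K p
  obtain ⟨n, -, hn⟩ := FiniteField.card K p
  refine ⟨(n : ℕ), n.2, ⟨(GaloisField.algEquivGaloisFieldOfFintype p (n : ℕ) hn).toRingEquiv⟩, ?_⟩
  have hcard : Nat.card Kˣ = p ^ (n : ℕ) - 1 := by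
    rw [Nat.card_eq_fintype_card, Fintype.card_units, hn]
  rw [← hcard]
  exact ⟨(zmodCyclicMulEquiv (inferInstance : IsCyclic Kˣ)).symm⟩

theorem units_sq_zero (p : ℕ) [Fact p.Prime] (R : Type) [Ring R] [Fintype R]
    [CharP R p] (hcop : Nat.Coprime (Nat.card Rˣ) p) :
    ∀ x : R, x * x = 0 → x = 0 := by
  intro x hx
  have h1 : (1 + x) * (1 - x) = 1 := by
    have h : (1 + x) * (1 - x) = 1 - x * x := by noncomm_ring
    rw [h, hx, sub_zero]
  have h2 : (1 - x) * (1 + x) = 1 := by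
    have h : (1 - x) * (1 + x) = 1 - x * x := by noncomm_ring
    rw [h, hx, sub_zero]
  set u : Rˣ := ⟨1 + x, 1 - x, h1, h2⟩ with hu
  have hp2 : 2 ≤ p := (Fact.out : p.Prime).two_le
  have hxp : x ^ p = 0 := by
    calc x ^ p = x ^ 2 * x ^ (p - 2) := by rw [← pow_add]; congr 1; omega
      _ = 0 := by rw [pow_two, hx, zero_mul]
  have hup : u ^ p = 1 := by
    apply Units.ext
    rw [Units.val_pow_eq_pow_val, Units.val_one]
    show (1 + x) ^ p = 1
    rw [add_pow_char_of_commute p (Commute.one_left x), one_pow, hxp, add_zero]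
  have hdvd1 : orderOf u ∣ p := orderOf_dvd_of_pow_eq_one hup
  have hdvd2 : orderOf u ∣ Nat.card Rˣ := orderOf_dvd_natCard u
  have hone : orderOf u = 1 := Nat.dvd_one.mp (hcop ▸ Nat.dvd_gcd hdvd2 hdvd1)
  have hu1 : u = 1 := orderOf_eq_one_iff.mp hone
  have : (1 : R) + x = 1 := congrArg Units.val hu1
  exact add_eq_left.mp this


/-- A finite ring of prime characteristic `p` with `|Rˣ|` coprime to `p` is a product of
finite fields of characteristic `p`, and its unit group is a corresponding product of cyclic
groups. -/
theorem finite_ring_coprime_units (p : ℕ) [Fact p.Prime] (R : Type) [Ring R] [Fintype R]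
    [CharP R p] (hcop : Nat.Coprime (Nat.card Rˣ) p) :
    ∃ (n : ℕ) (k : Fin n → ℕ), (∀ i, 0 < k i) ∧
      Nonempty (R ≃+* ((i : Fin n) → GaloisField p (k i))) ∧
      Nonempty (Rˣ ≃* ((i : Fin n) → Multiplicative (ZMod (p ^ k i - 1)))) := by
  classical
  have hred : IsReduced R := isReduced_of_sq (units_sq_zero p R hcop)
  have hcomm : ∀ a b : R, a * b = b * a :=
    comm_of_reduced (Nat.card R) R le_rfl hred
  letI : CommRing R := { ‹Ring R› with mul_comm := hcomm }
  haveI : IsReduced R := hred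
  haveI : IsArtinianRing R := inferInstance
  haveI : Finite {I : Ideal R | I.IsMaximal} := by
    haveI : Finite (Ideal R) := Finite.of_injective _ SetLike.coe_injective
    infer_instance
  let E0 : R ≃+* ∀ I : {I : Ideal R | I.IsMaximal}, R ⧸ I.1 :=
    (IsArtinianRing.equivPi R).toRingEquiv.trans
      (RingEquiv.piCongrLeft (fun I : {I : Ideal R | I.IsMaximal} => R ⧸ I.1)
        (MaximalSpectrum.equivSubtype R : MaximalSpectrum R ≃ {I : Ideal R | I.IsMaximal}))
  haveI : ∀ I : {I : Ideal R | I.IsMaximal}, I.1.IsMaximal := fun I => I.2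
  letI : ∀ I : {I : Ideal R | I.IsMaximal}, Field (R ⧸ I.1) := fun I =>
    Ideal.Quotient.field I.1
  haveI charq : ∀ I : {I : Ideal R | I.IsMaximal}, CharP (R ⧸ I.1) p := by
    intro I
    have h0 : ((p : ℕ) : R ⧸ I.1) = 0 := by
      rw [← map_natCast (Ideal.Quotient.mk I.1) p, CharP.cast_eq_zero, map_zero]
    haveI : CharP (R ⧸ I.1) (ringChar (R ⧸ I.1)) := ringChar.charP _
    have hq : ringChar (R ⧸ I.1) ∣ p := (CharP.cast_eq_zero_iff _ (ringChar (R ⧸ I.1)) p).mp h0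
    have hne : ringChar (R ⧸ I.1) ≠ 1 := CharP.ringChar_ne_one
    have : ringChar (R ⧸ I.1) = p := by
      rcases (Fact.out : p.Prime).eq_one_or_self_of_dvd _ hq with h | h
      · exact absurd h hne
      · exact h
    exact this ▸ ringChar.charP _
  have pieces : ∀ I : {I : Ideal R | I.IsMaximal}, ∃ m, 0 < m ∧
      Nonempty ((R ⧸ I.1) ≃+* GaloisField p m) ∧
      Nonempty ((R ⧸ I.1)ˣ ≃* Multiplicative (ZMod (p ^ m - 1))) := fun I =>
    field_pieces p _
  choose k hk0 hk1 hk2 using pieces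
  haveI : Fintype {I : Ideal R | I.IsMaximal} := Fintype.ofFinite _
  let n := Fintype.card {I : Ideal R | I.IsMaximal}
  let eFin : Fin n ≃ {I : Ideal R | I.IsMaximal} := (Fintype.equivFin _).symm
  let E : R ≃+* ∀ j : Fin n, GaloisField p (k (eFin j)) :=
    (E0.trans (RingEquiv.piCongrRight fun I => (hk1 I).some)).trans
      (RingEquiv.piCongrLeft (fun I => GaloisField p (k I)) eFin).symm
  refine ⟨n, fun j => k (eFin j), fun j => hk0 _, ⟨E⟩, ?_⟩
  exact ⟨(Units.mapEquiv E.toMulEquiv).trans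
    ((piUnits _).trans (MulEquiv.piCongrRight fun j => (Units.mapEquiv (hk1 (eFin j)).some.toMulEquiv.symm).trans (hk2 (eFin j)).some))⟩
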